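/- arXiv:2312.09485 — 5 statements merged into one kernel-verified Lean document; each statement's English description precedes it below -/
import Mathlib

section
/- Define the degenerate Stirling numbers of the second kind by S_λ(n,k) = (1/k!) Σ_{j=0}^{k} (-1)^{k-j} C(k,j) (j)_{n,λ}. Then for every natural number n and every x (as a polynomial identity over ℚ[λ], or for all real x), one has (x)_{n,λ} = Σ_{k=0}^{n} S_λ(n,k) (x)_k, where (x)_k = x(x-1)⋯(x-k+1) is the ordinary falling factorial. -/
/-- The degenerate falling factorial `(x)_{n,λ} = x(x-λ)⋯(x-(n-1)λ)`, with `(x)_{0,λ} = 1`. -/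
def degFall (x lam : ℝ) (n : ℕ) : ℝ :=
  ∏ i ∈ Finset.range n, (x - (i : ℝ) * lam)

/-- The ordinary falling factorial `(x)_k = x(x-1)⋯(x-k+1)`, with `(x)_0 = 1`. -/
def fallFact (x : ℝ) (k : ℕ) : ℝ :=
  ∏ i ∈ Finset.range k, (x - (i : ℝ))

/-- The degenerate Stirling numbers of the second kind
`S_λ(n,k) = (1/k!) Σ_{j=0}^k (-1)^{k-j} C(k,j) (j)_{n,λ}`. -/
noncomputable def degStirling (lam : ℝ) (n k : ℕ) : ℝ :=
  (1 / (k.factorial : ℝ)) *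
    ∑ j ∈ Finset.range (k + 1), (-1 : ℝ) ^ (k - j) * (k.choose j : ℝ) * degFall (j : ℝ) lam n

open Finset

/-- alternating binomial transform -/
noncomputable def altB (f : ℕ → ℝ) (k : ℕ) : ℝ :=
  ∑ j ∈ Finset.range (k + 1), (-1 : ℝ) ^ j * (k.choose j : ℝ) * f j

lemma degStirling_eq_altB (lam : ℝ) (n k : ℕ) :
    degStirling lam n k =
      (1 / (k.factorial : ℝ)) * ((-1 : ℝ) ^ k * altB (fun j => degFall (j : ℝ) lam n) k) := by
  unfold degStirling altB
  congr 1
  rw [Finset.mul_sum]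
  apply Finset.sum_congr rfl
  intro j hj
  have hjk : j ≤ k := Nat.lt_succ_iff.mp (Finset.mem_range.mp hj)
  have hsign : (-1 : ℝ) ^ (k - j) = (-1) ^ k * (-1) ^ j := by
    have : (-1 : ℝ) ^ (k - j) * (-1) ^ j = (-1) ^ k := by
      rw [← pow_add, Nat.sub_add_cancel hjk]
    have hj2 : (-1 : ℝ) ^ j * (-1) ^ j = 1 := by
      rw [← pow_add, ← two_mul, pow_mul]; norm_num
    calc (-1 : ℝ) ^ (k - j) = (-1 : ℝ) ^ (k - j) * ((-1) ^ j * (-1) ^ j) := by rw [hj2, mul_one]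
      _ = ((-1 : ℝ) ^ (k - j) * (-1) ^ j) * (-1) ^ j := by ring
      _ = (-1) ^ k * (-1) ^ j := by rw [this]
  rw [hsign]; ring

lemma altB_pascal (f : ℕ → ℝ) (k : ℕ) :
    altB f (k + 1) = altB f k - altB (fun j => f (j + 1)) k := by
  unfold altB
  rw [Finset.sum_range_succ' (fun j => (-1 : ℝ) ^ j * ((k+1).choose j : ℝ) * f j) (k+1)]
  have h1 : ∀ j, ((k+1).choose (j+1) : ℝ) = (k.choose j : ℝ) + (k.choose (j+1) : ℝ) := by
    intro j; rw [Nat.choose_succ_succ]; push_cast; ring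
  have : ∑ j ∈ Finset.range (k+1), (-1:ℝ)^(j+1) * ((k+1).choose (j+1) : ℝ) * f (j+1)
      = (∑ j ∈ Finset.range (k+1), (-1:ℝ)^(j+1) * (k.choose (j+1) : ℝ) * f (j+1))
        - ∑ j ∈ Finset.range (k+1), (-1:ℝ)^j * (k.choose j : ℝ) * f (j+1) := by
    rw [← Finset.sum_sub_distrib]
    apply Finset.sum_congr rfl
    intro j _
    rw [h1 j]; ring
  rw [this]
  have h2 : ∑ j ∈ Finset.range (k+1), (-1:ℝ)^j * (k.choose j : ℝ) * f j
      = (∑ j ∈ Finset.range (k+1), (-1:ℝ)^(j+1) * (k.choose (j+1) : ℝ) * f (j+1)) + f 0 := by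
    have := Finset.sum_range_succ' (fun j => (-1:ℝ)^j * (k.choose j : ℝ) * f j) k
    rw [this]
    have h3 : ∑ j ∈ Finset.range (k+1), (-1:ℝ)^(j+1) * (k.choose (j+1) : ℝ) * f (j+1)
        = ∑ j ∈ Finset.range k, (-1:ℝ)^(j+1) * (k.choose (j+1) : ℝ) * f (j+1) := by
      rw [Finset.sum_range_succ]
      simp [Nat.choose_succ_self]
    rw [h3]
    simp
  rw [h2]
  simp
  ring

lemma altB_mul (f : ℕ → ℝ) (k : ℕ) :
    ∑ j ∈ Finset.range (k + 2), (-1:ℝ)^j * ((k+1).choose j : ℝ) * ((j : ℝ) * f j)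
      = -((k : ℝ) + 1) * altB (fun j => f (j + 1)) k := by
  rw [Finset.sum_range_succ' (fun j => (-1:ℝ)^j * ((k+1).choose j : ℝ) * ((j:ℝ) * f j)) (k+1)]
  have h1 : ∀ j : ℕ, ((j:ℝ)+1) * ((k+1).choose (j+1) : ℝ) = ((k:ℝ)+1) * (k.choose j : ℝ) := by
    intro j
    have := Nat.add_one_mul_choose_eq k j
    have hc : ((k+1) * k.choose j : ℕ) = ((k+1).choose (j+1) * (j+1) : ℕ) := this
    have := congrArg (fun m : ℕ => (m : ℝ)) hc
    push_cast at this
    linarith [this]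
  unfold altB
  rw [Finset.mul_sum]
  have : ∑ j ∈ Finset.range (k+1), (-1:ℝ)^(j+1) * ((k+1).choose (j+1) : ℝ) * (((j:ℕ)+1:ℕ) * f (j+1))
      = ∑ j ∈ Finset.range (k+1), -((k:ℝ)+1) * ((-1:ℝ)^j * (k.choose j : ℝ) * f (j+1)) := by
    apply Finset.sum_congr rfl
    intro j _
    push_cast
    have := h1 j
    calc (-1:ℝ)^(j+1) * ((k+1).choose (j+1) : ℝ) * (((j:ℝ)+1) * f (j+1))
        = (-1:ℝ)^(j+1) * ((((j:ℝ)+1) * ((k+1).choose (j+1) : ℝ))) * f (j+1) := by ring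
      _ = (-1:ℝ)^(j+1) * (((k:ℝ)+1) * (k.choose j : ℝ)) * f (j+1) := by rw [this]
      _ = -((k:ℝ)+1) * ((-1:ℝ)^j * (k.choose j : ℝ) * f (j+1)) := by rw [pow_succ]; ring
  simp only [Nat.cast_add, Nat.cast_one] at this ⊢
  rw [this]
  simp

lemma degFall_succ_apply (lam : ℝ) (n : ℕ) (y : ℝ) :
    degFall y lam (n + 1) = degFall y lam n * (y - (n : ℝ) * lam) := by
  unfold degFall
  rw [Finset.prod_range_succ]

lemma degStirling_rec (lam : ℝ) (n k : ℕ) :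
    degStirling lam (n + 1) (k + 1)
      = degStirling lam n k + (((k : ℝ) + 1) - (n : ℝ) * lam) * degStirling lam n (k + 1) := by
  rw [degStirling_eq_altB, degStirling_eq_altB, degStirling_eq_altB]
  set f : ℕ → ℝ := fun j => degFall (j : ℝ) lam n with hf
  have hB1 : altB (fun j => degFall (j : ℝ) lam (n+1)) (k+1)
      = -((k:ℝ)+1) * (altB f k - altB f (k+1)) - (n : ℝ) * lam * altB f (k+1) := by
    have hsplit : altB (fun j => degFall (j : ℝ) lam (n+1)) (k+1)
        = (∑ j ∈ Finset.range (k+2), (-1:ℝ)^j * ((k+1).choose j : ℝ) * ((j:ℝ) * f j))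
          - (n : ℝ) * lam * altB f (k+1) := by
      unfold altB
      rw [Finset.mul_sum, ← Finset.sum_sub_distrib]
      apply Finset.sum_congr rfl
      intro j _
      simp only [hf]
      simp only [degFall_succ_apply]
      ring
    rw [hsplit, altB_mul]
    have := altB_pascal f k
    rw [show altB (fun j => f (j+1)) k = altB f k - altB f (k+1) by linarith [altB_pascal f k]]
  rw [hB1]
  have hfact : ((k+1).factorial : ℝ) = ((k:ℝ)+1) * (k.factorial : ℝ) := by
    rw [Nat.factorial_succ]; push_cast; ring
  have hk0 : (k.factorial : ℝ) ≠ 0 := Nat.cast_ne_zero.mpr (Nat.factorial_ne_zero k)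
  have hk1 : ((k:ℝ)+1) ≠ 0 := by positivity
  rw [hfact]
  field_simp
  ring

lemma degFall_zero_left (lam : ℝ) (n : ℕ) :
    degFall 0 lam (n + 1) = 0 := by
  unfold degFall
  apply Finset.prod_eq_zero (Finset.mem_range.mpr (Nat.succ_pos n))
  simp

lemma degStirling_zero_right (lam : ℝ) (n : ℕ) :
    degStirling lam n 0 = degFall 0 lam n := by
  unfold degStirling
  simp

lemma degStirling_eq_zero (lam : ℝ) : ∀ n k : ℕ, n < k → degStirling lam n k = 0 := by
  intro n
  induction n with
  | zero =>
    intro k hk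
    obtain ⟨m, rfl⟩ : ∃ m, k = m + 1 := ⟨k - 1, by omega⟩
    rw [degStirling_eq_altB]
    have : altB (fun j => degFall (j:ℝ) lam 0) (m+1) = 0 := by
      unfold altB degFall
      simp only [Finset.range_zero, Finset.prod_empty, mul_one]
      have := Int.alternating_sum_range_choose (n := m+1)
      have h2 := congrArg (fun z : ℤ => (z : ℝ)) this
      push_cast at h2
      simpa using h2
    rw [this]; ring
  | succ n ih =>
    intro k hk
    obtain ⟨m, rfl⟩ : ∃ m, k = m + 1 := ⟨k - 1, by omega⟩
    rw [degStirling_rec]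
    rw [ih m (Nat.lt_of_succ_lt_succ hk), ih (m+1) (Nat.lt_of_succ_lt (Nat.lt_of_succ_lt_succ (Nat.succ_lt_succ hk)))]
    ring

lemma fallFact_succ (x : ℝ) (k : ℕ) :
    fallFact x (k + 1) = fallFact x k * (x - (k : ℝ)) := by
  unfold fallFact
  rw [Finset.prod_range_succ]

lemma nlam_degStirling_zero (lam : ℝ) (n : ℕ) :
    (n : ℝ) * lam * degStirling lam n 0 = 0 := by
  cases n with
  | zero => simp
  | succ m => rw [degStirling_zero_right, degFall_zero_left]; ring


/-- `(x)_{n,λ} = Σ_{k=0}^n S_λ(n,k) (x)_k` for all real `x`. -/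
theorem degFall_eq_sum_degStirling_fallFact (lam : ℝ) (n : ℕ) (x : ℝ) :
    degFall x lam n = ∑ k ∈ Finset.range (n + 1), degStirling lam n k * fallFact x k := by
  induction n with
  | zero =>
    simp [degFall, fallFact, degStirling]
  | succ n ih =>
    rw [degFall_succ_apply, ih, Finset.sum_mul]
    rw [Finset.sum_range_succ' (fun k => degStirling lam (n+1) k * fallFact x k) (n+1)]
    have h0 : degStirling lam (n+1) 0 * fallFact x 0 = 0 := by
      rw [degStirling_zero_right, degFall_zero_left]; ring
    rw [h0, add_zero]
    have hterm : ∀ k, degStirling lam n k * fallFact x k * (x - (n:ℝ) * lam)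
        = degStirling lam n k * fallFact x (k+1)
          + (((k:ℝ)) - (n:ℝ)*lam) * degStirling lam n k * fallFact x k := by
      intro k
      rw [fallFact_succ]
      ring
    have hterm' : ∀ k, degStirling lam (n+1) (k+1) * fallFact x (k+1)
        = degStirling lam n k * fallFact x (k+1)
          + (((k:ℝ)+1) - (n:ℝ)*lam) * degStirling lam n (k+1) * fallFact x (k+1) := by
      intro k
      rw [degStirling_rec]
      ring
    simp only [hterm, hterm']
    rw [Finset.sum_add_distrib, Finset.sum_add_distrib]
    congr 1
    -- goal: ∑ (k - nλ) S(n,k) (x)_k = ∑ (k+1-nλ) S(n,k+1) (x)_{k+1}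
    set g : ℕ → ℝ := fun k => ((k:ℝ) - (n:ℝ)*lam) * degStirling lam n k * fallFact x k with hg
    have e1 : ∑ k ∈ Finset.range (n+1), (((k:ℝ)+1) - (n:ℝ)*lam) * degStirling lam n (k+1) * fallFact x (k+1)
        = ∑ k ∈ Finset.range (n+1), g (k+1) := by
      apply Finset.sum_congr rfl; intro k _; simp only [hg]; push_cast; ring
    rw [e1]
    have e2 : ∑ k ∈ Finset.range (n+2), g k = ∑ k ∈ Finset.range (n+1), g (k+1) + g 0 :=
      Finset.sum_range_succ' g (n+1)
    have e3 : ∑ k ∈ Finset.range (n+2), g k = ∑ k ∈ Finset.range (n+1), g k + g (n+1) :=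
      Finset.sum_range_succ g (n+1)
    have hg0 : g 0 = 0 := by
      have h := nlam_degStirling_zero lam n
      have h1 : fallFact x 0 = 1 := by simp [fallFact]
      simp only [hg, Nat.cast_zero, zero_sub, h1]
      linear_combination -h
    have hgn : g (n+1) = 0 := by
      simp only [hg]
      rw [degStirling_eq_zero lam n (n+1) (Nat.lt_succ_self n)]
      ring
    have := e2.symm.trans e3
    rw [hg0, add_zero] at this
    rw [hgn, add_zero] at this
    exact this.symm
end

section
/- Let m be a positive integer, r a nonnegative integer, and λ a real parameter. Define the degenerate r-Whitney numbers of the second kind by W^{(r)}_{m,λ}(n,k) = (1/(m^k k!)) Σ_{j=0}^{k} C(k,j) (-1)^{k-j} (mj+r)_{n,λ}. Then for all n ≥ 0 and all x, (mx+r)_{n,λ} = Σ_{k=0}^{n} W^{(r)}_{m,λ}(n,k) m^k (x)_k as a polynomial identity in x. -/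
/-- The degenerate r-Whitney numbers of the second kind
`W^{(r)}_{m,λ}(n,k) = (1/(mᵏ k!)) Σ_{j=0}^k C(k,j) (-1)^{k-j} (mj+r)_{n,λ}`. -/
noncomputable def degRWhitney (m r : ℕ) (lam : ℝ) (n k : ℕ) : ℝ :=
  (1 / ((m : ℝ) ^ k * (k.factorial : ℝ))) *
    ∑ j ∈ Finset.range (k + 1),
      (k.choose j : ℝ) * (-1 : ℝ) ^ (k - j) * degFall ((m : ℝ) * (j : ℝ) + (r : ℝ)) lam n

open Finset Polynomial

lemma alt_sum (M K : ℕ) (h : M < K) :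
    ∑ t ∈ range K, (-1:ℝ)^t * (M.choose t : ℝ) = if M = 0 then 1 else 0 := by
  have hsub : ∑ t ∈ range (M+1), (-1:ℝ)^t * (M.choose t : ℝ)
      = ∑ t ∈ range K, (-1:ℝ)^t * (M.choose t : ℝ) := by
    apply Finset.sum_subset (Finset.range_subset_range.2 h)
    intro t _ ht
    have : M < t := by simpa using ht
    simp [Nat.choose_eq_zero_of_lt this]
  rw [← hsub]
  rcases eq_or_ne M 0 with h0 | h0
  · subst h0; simp
  · have h2 := Int.alternating_sum_range_choose_of_ne h0
    rw [if_neg h0]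
    exact_mod_cast h2

lemma inversion (g : ℕ → ℝ) (N n : ℕ) (hN : N ≤ n) :
    ∑ k ∈ range (n+1), (N.choose k : ℝ) *
      ∑ j ∈ range (k+1), (k.choose j : ℝ) * (-1:ℝ)^(k-j) * g j = g N := by
  -- extend inner sums to range (n+1)
  have hext : ∀ k ∈ range (n+1),
      (N.choose k : ℝ) * ∑ j ∈ range (k+1), (k.choose j : ℝ) * (-1:ℝ)^(k-j) * g j
      = ∑ j ∈ range (n+1), (N.choose k : ℝ) * ((k.choose j : ℝ) * (-1:ℝ)^(k-j) * g j) := by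
    intro k hk
    have h1 : ∑ j ∈ range (k+1), (k.choose j : ℝ) * (-1:ℝ)^(k-j) * g j
        = ∑ j ∈ range (n+1), (k.choose j : ℝ) * (-1:ℝ)^(k-j) * g j := by
      apply Finset.sum_subset (Finset.range_subset_range.2 (by simp [Nat.lt_succ_iff] at hk; omega))
      intro j _ hj
      have : k < j := by simpa using hj
      simp [Nat.choose_eq_zero_of_lt this]
    rw [h1, mul_sum]
  rw [Finset.sum_congr rfl hext, Finset.sum_comm]
  have key : ∀ j ∈ range (n+1),
      (∑ k ∈ range (n+1), (N.choose k : ℝ) * ((k.choose j : ℝ) * (-1:ℝ)^(k-j)))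
      = if j = N then 1 else 0 := by
    intro j hj
    have hj' : j ≤ n := by simpa [Nat.lt_succ_iff] using hj
    have hsplit : ∑ k ∈ range (n+1), (N.choose k : ℝ) * ((k.choose j : ℝ) * (-1:ℝ)^(k-j))
        = ∑ k ∈ Ico j (n+1), (N.choose k : ℝ) * ((k.choose j : ℝ) * (-1:ℝ)^(k-j)) := by
      rw [range_eq_Ico, ← Finset.sum_Ico_consecutive _ (Nat.zero_le j) (by omega : j ≤ n+1)]
      have : ∑ k ∈ Ico 0 j, (N.choose k : ℝ) * ((k.choose j : ℝ) * (-1:ℝ)^(k-j)) = 0 := by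
        apply Finset.sum_eq_zero
        intro k hk
        have : k < j := by simp at hk; omega
        simp [Nat.choose_eq_zero_of_lt this]
      rw [this, zero_add]
    rw [hsplit, Finset.sum_Ico_eq_sum_range]
    have hterm : ∀ t, (N.choose (j+t) : ℝ) * (((j+t).choose j : ℝ) * (-1:ℝ)^(j+t-j))
        = (N.choose j : ℝ) * ((-1:ℝ)^t * ((N-j).choose t : ℝ)) := by
      intro t
      have ht : j + t - j = t := by omega
      have hcc : N.choose (j+t) * (j+t).choose j = N.choose j * (N-j).choose t := by
        rcases le_or_gt (j+t) N with h | h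
        · have := Nat.choose_mul (n := N) (k := j+t) (s := j) (by omega)
          simpa [ht] using this
        · have h1 : N.choose (j+t) = 0 := Nat.choose_eq_zero_of_lt h
          rcases le_or_gt j N with h2 | h2
          · have : N - j < t := by omega
            simp [h1, Nat.choose_eq_zero_of_lt this]
          · simp [h1, Nat.choose_eq_zero_of_lt h2]
        
      have hcast : (N.choose (j+t) : ℝ) * ((j+t).choose j : ℝ)
          = (N.choose j : ℝ) * ((N-j).choose t : ℝ) := by exact_mod_cast congrArg Nat.cast hcc
      rw [ht, show (N.choose (j+t) : ℝ) * (((j+t).choose j : ℝ) * (-1:ℝ)^t)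
          = ((N.choose (j+t) : ℝ) * ((j+t).choose j : ℝ)) * (-1:ℝ)^t from by ring, hcast]
      ring
    rw [Finset.sum_congr rfl (fun t _ => hterm t), ← Finset.mul_sum]
    have halt : ∑ t ∈ range (n+1-j), (-1:ℝ)^t * ((N-j).choose t : ℝ)
        = if N - j = 0 then 1 else 0 := alt_sum _ _ (by omega)
    rw [halt]
    rcases lt_trichotomy j N with h | h | h
    · have : N - j ≠ 0 := by omega
      simp [this, Nat.ne_of_lt h]
    · subst h; simp
    · simp [Nat.choose_eq_zero_of_lt h, Nat.ne_of_gt h]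
  have hfac : ∀ j ∈ range (n+1),
      ∑ k ∈ range (n+1), (N.choose k : ℝ) * ((k.choose j : ℝ) * (-1:ℝ)^(k-j) * g j)
      = (if j = N then (1:ℝ) else 0) * g j := by
    intro j hj
    rw [← key j hj, Finset.sum_mul]
    exact Finset.sum_congr rfl fun k _ => by ring
  rw [Finset.sum_congr rfl hfac]
  simp only [ite_mul, one_mul, zero_mul]
  rw [Finset.sum_ite_eq' (range (n+1)) N g]
  simp [Nat.lt_succ_iff, hN]



/-- fallFact at a natural equals k! * choose. -/
lemma fallFact_nat (N k : ℕ) : fallFact (N : ℝ) k = (k.factorial : ℝ) * (N.choose k : ℝ) := by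
  induction k with
  | zero => simp [fallFact]
  | succ k ih =>
    have hstep : fallFact (N : ℝ) (k+1) = fallFact (N : ℝ) k * ((N : ℝ) - k) := by
      simp [fallFact, Finset.prod_range_succ]
    rw [hstep, ih]
    rcases lt_or_ge k N with h | h
    · have hsub : ((N : ℝ) - (k : ℝ)) = ((N - k : ℕ) : ℝ) := by
        push_cast [Nat.cast_sub h.le]; ring
      rw [hsub]
      have := Nat.choose_succ_right_eq N k
      have hcast : ((N.choose (k+1) * (k+1) : ℕ) : ℝ) = ((N.choose k * (N - k) : ℕ) : ℝ) :=
        congrArg Nat.cast this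
      push_cast at hcast ⊢
      push_cast [Nat.factorial_succ]
      nlinarith [hcast]
    · have h1 : N.choose (k+1) = 0 := Nat.choose_eq_zero_of_lt (by omega)
      rcases eq_or_lt_of_le h with h2 | h2
      · subst h2; simp [h1]
      · have : N.choose k = 0 := Nat.choose_eq_zero_of_lt h2
        simp [h1, this]

/-- `(mx+r)_{n,λ} = Σ_{k=0}^n W^{(r)}_{m,λ}(n,k) mᵏ (x)_k` for all real `x`. -/
theorem degFall_eq_sum_degRWhitney (m : ℕ) (hm : 0 < m) (r : ℕ) (lam : ℝ) (n : ℕ) (x : ℝ) :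
    degFall ((m : ℝ) * x + (r : ℝ)) lam n =
      ∑ k ∈ Finset.range (n + 1), degRWhitney m r lam n k * (m : ℝ) ^ k * fallFact x k := by
  set a : ℕ → ℝ := fun k => degRWhitney m r lam n k * (m : ℝ) ^ k with ha
  set P : ℝ[X] := ∏ i ∈ Finset.range n, (C (m:ℝ) * X + C ((r:ℝ) - (i:ℝ)*lam)) with hP
  set Q : ℝ[X] := ∑ k ∈ Finset.range (n+1), C (a k) * ∏ i ∈ Finset.range k, (X - C (i:ℝ))
    with hQ
  have hPeval : ∀ y : ℝ, P.eval y = degFall ((m:ℝ)*y + (r:ℝ)) lam n := by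
    intro y
    rw [hP, eval_prod, degFall]
    exact Finset.prod_congr rfl fun i _ => by simp; ring
  have hQeval : ∀ y : ℝ, Q.eval y = ∑ k ∈ range (n+1), a k * fallFact y k := by
    intro y
    rw [hQ, eval_finset_sum]
    refine Finset.sum_congr rfl fun k _ => ?_
    rw [eval_mul, eval_C, eval_prod, fallFact]
    simp
  have hgN : ∀ N : ℕ, N ≤ n →
      ∑ k ∈ range (n+1), a k * fallFact (N:ℝ) k
        = degFall ((m:ℝ)*(N:ℝ) + (r:ℝ)) lam n := by
    intro N hN
    have hm' : (0:ℝ) < m := by exact_mod_cast hm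
    rw [← inversion (fun j => degFall ((m:ℝ)*(j:ℝ) + (r:ℝ)) lam n) N n hN]
    refine Finset.sum_congr rfl fun k _ => ?_
    rw [fallFact_nat, ha]
    simp only [degRWhitney]
    have hfk : (0:ℝ) < (k.factorial : ℝ) := by exact_mod_cast k.factorial_pos
    have hmk : (0:ℝ) < ((m:ℝ))^k := by positivity
    field_simp
  have hdP : P.natDegree ≤ n := by
    refine le_trans (Polynomial.natDegree_prod_le _ _) ?_
    refine le_trans (Finset.sum_le_card_nsmul _ _ 1 fun i _ => Polynomial.natDegree_linear_le) ?_
    simp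
  have hdQ : Q.natDegree ≤ n := by
    refine Polynomial.natDegree_sum_le_of_forall_le _ _ fun k hk => ?_
    refine le_trans (Polynomial.natDegree_C_mul_le _ _) ?_
    refine le_trans (Polynomial.natDegree_prod_le _ _) ?_
    calc ∑ i ∈ range k, (X - C (i:ℝ)).natDegree = ∑ _i ∈ range k, 1 :=
          Finset.sum_congr rfl fun i _ => Polynomial.natDegree_X_sub_C _
      _ = k := by simp
      _ ≤ n := by simpa [Nat.lt_succ_iff] using hk
  have hPQ : P - Q = 0 := by
    apply Polynomial.eq_zero_of_natDegree_lt_card_of_eval_eq_zero' _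
      ((range (n+1)).image (fun N : ℕ => (N:ℝ)))
    · intro y hy
      simp only [Finset.mem_image, Finset.mem_range] at hy
      obtain ⟨N, hN, rfl⟩ := hy
      rw [eval_sub, hPeval, hQeval, hgN N (by omega), sub_self]
    · have hcard : #((range (n+1)).image (fun N : ℕ => (N:ℝ))) = n+1 := by
        rw [Finset.card_image_of_injective _ Nat.cast_injective, card_range]
      rw [hcard]
      calc (P-Q).natDegree ≤ max P.natDegree Q.natDegree := Polynomial.natDegree_sub_le P Q
        _ ≤ n := max_le hdP hdQ
        _ < n+1 := Nat.lt_succ_self n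
  have hPQ' : P = Q := sub_eq_zero.mp hPQ
  calc degFall ((m:ℝ)*x + (r:ℝ)) lam n = P.eval x := (hPeval x).symm
    _ = Q.eval x := by rw [hPQ']
    _ = ∑ k ∈ range (n+1), a k * fallFact x k := hQeval x
    _ = ∑ k ∈ Finset.range (n + 1), degRWhitney m r lam n k * (m : ℝ) ^ k * fallFact x k :=
      Finset.sum_congr rfl fun k _ => by rw [ha]
end

section
/- Dobinski-type formula for degenerate Dowling polynomials: let m be a positive integer, λ real, and define W_{m,λ}(n,k) = (1/(m^k k!)) Σ_{j=0}^{k} C(k,j)(-1)^{k-j}(mj+1)_{n,λ} and D_{m,λ}(n,x) = Σ_{k=0}^{n} W_{m,λ}(n,k) x^k. Then for every real x and every n ≥ 0, the series Σ_{k=0}^{∞} (x^k/(m^k k!)) (mk+1)_{n,λ} converges and D_{m,λ}(n,x) = e^{-x/m} Σ_{k=0}^{∞} (x^k/(m^k k!)) (mk+1)_{n,λ}. -/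
/-- The degenerate Whitney numbers of the second kind. -/
noncomputable def degWhitney (m : ℕ) (lam : ℝ) (n k : ℕ) : ℝ :=
  (1 / ((m : ℝ) ^ k * (k.factorial : ℝ))) *
    ∑ j ∈ Finset.range (k + 1),
      (k.choose j : ℝ) * (-1 : ℝ) ^ (k - j) * degFall ((m : ℝ) * (j : ℝ) + 1) lam n

/-- The degenerate Dowling polynomials `D_{m,λ}(n,x) = Σ_{k=0}^n W_{m,λ}(n,k) xᵏ`. -/
noncomputable def degDowling (m : ℕ) (lam : ℝ) (n : ℕ) (x : ℝ) : ℝ :=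
  ∑ k ∈ Finset.range (n + 1), degWhitney m lam n k * x ^ k


open Finset Polynomial

lemma fwdDiff_iter_zero_fun (k : ℕ) :
    (fwdDiff (1:ℕ))^[k] (fun _ : ℕ => (0:ℝ)) = fun _ => 0 := by
  induction k with
  | zero => rfl
  | succ k ih =>
    rw [Function.iterate_succ_apply,
      show fwdDiff (1:ℕ) (fun _ : ℕ => (0:ℝ)) = fun _ => 0 from funext fun _ => sub_self 0, ih]

lemma fwdDiff_poly_eval (P : Polynomial ℝ) :
    fwdDiff (1:ℕ) (fun j : ℕ => P.eval (j : ℝ)) =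
      fun j : ℕ => (P.comp (X + C 1) - P).eval (j : ℝ) := by
  funext j
  simp [fwdDiff, eval_comp]

lemma fwdDiff_iter_poly_zero : ∀ (k : ℕ) (P : Polynomial ℝ), P.natDegree < k →
    (fwdDiff (1:ℕ))^[k] (fun j : ℕ => P.eval (j : ℝ)) = fun _ => 0 := by
  intro k
  induction k with
  | zero => intro P h; exact absurd h (Nat.not_lt_zero _)
  | succ k ih =>
    intro P h
    rw [Function.iterate_succ_apply, fwdDiff_poly_eval]
    set Q := P.comp (X + C 1) - P with hQ
    by_cases hQ0 : Q = 0
    · rw [hQ0]; simpa using fwdDiff_iter_zero_fun k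
    · by_cases hP0 : P.natDegree = 0
      · exfalso
        apply hQ0
        obtain ⟨c, rfl⟩ := Polynomial.natDegree_eq_zero.mp hP0
        simp [hQ]
      · have hP : P ≠ 0 := fun h0 => hP0 (by simp [h0])
        have hn1 : ((X:ℝ[X]) + C 1).natDegree = 1 := Polynomial.natDegree_X_add_C 1
        have hl1 : ((X:ℝ[X]) + C 1).leadingCoeff = 1 := (Polynomial.monic_X_add_C 1).leadingCoeff
        have hlc : (P.comp (X + C 1)).leadingCoeff = P.leadingCoeff := by
          rw [Polynomial.leadingCoeff_comp (by rw [hn1]; exact one_ne_zero)]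
          rw [hl1, one_pow, mul_one]
        have hc0 : P.comp (X + C 1) ≠ 0 := by
          intro h0
          apply hP
          rw [← Polynomial.leadingCoeff_eq_zero, ← hlc, h0, Polynomial.leadingCoeff_zero]
        have hdc : (P.comp (X + C 1)).natDegree = P.natDegree := by
          rw [Polynomial.natDegree_comp, hn1, mul_one]
        have hdeg : Q.degree < P.degree := by
          have := Polynomial.degree_sub_lt
            (by rw [Polynomial.degree_eq_natDegree hc0, Polynomial.degree_eq_natDegree hP, hdc])
            hc0 hlc
          rwa [Polynomial.degree_eq_natDegree hc0, hdc, ← Polynomial.degree_eq_natDegree hP]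
            at this
        have : Q.natDegree < P.natDegree :=
          Polynomial.natDegree_lt_natDegree hQ0 hdeg
        exact ih Q (lt_of_lt_of_le this (Nat.lt_succ_iff.mp h))

/-- The key vanishing lemma: the Whitney numerator vanishes for `k > n`. -/
lemma whitney_sum_zero (m : ℕ) (lam : ℝ) (n k : ℕ) (hk : n < k) :
    ∑ j ∈ Finset.range (k + 1),
      (k.choose j : ℝ) * (-1 : ℝ) ^ (k - j) * degFall ((m : ℝ) * (j : ℝ) + 1) lam n = 0 := by
  set P : ℝ[X] := ∏ i ∈ Finset.range n, (C (m:ℝ) * X + C (1 - (i:ℝ) * lam)) with hP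
  have heval : ∀ j : ℕ, P.eval (j:ℝ) = degFall ((m:ℝ) * j + 1) lam n := by
    intro j
    rw [hP, Polynomial.eval_prod, degFall]
    refine Finset.prod_congr rfl fun i _ => ?_
    simp
    ring
  have hdeg : P.natDegree ≤ n := by
    refine le_trans (Polynomial.natDegree_prod_le _ _) ?_
    have : ∑ i ∈ Finset.range n, (C (m:ℝ) * X + C (1 - (i:ℝ) * lam)).natDegree
        ≤ ∑ _i ∈ Finset.range n, 1 :=
      Finset.sum_le_sum (fun i _ => Polynomial.natDegree_linear_le)
    simpa using this
  have h0 := fwdDiff_iter_poly_zero k P (lt_of_le_of_lt hdeg hk)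
  have h1 := fwdDiff_iter_eq_sum_shift (1:ℕ) (fun j : ℕ => P.eval (j:ℝ)) k 0
  rw [h0] at h1
  simp only [zero_add, smul_eq_mul, smul_eq_mul] at h1
  have h2 : (0:ℝ) = ∑ j ∈ Finset.range (k + 1),
      ((-1:ℤ) ^ (k - j) * (k.choose j : ℤ)) • P.eval ((j:ℝ)) := by
    simpa using h1
  rw [eq_comm] at h2
  calc ∑ j ∈ Finset.range (k + 1),
        (k.choose j : ℝ) * (-1 : ℝ) ^ (k - j) * degFall ((m : ℝ) * (j : ℝ) + 1) lam n
      = ∑ j ∈ Finset.range (k + 1),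
        ((-1:ℤ) ^ (k - j) * (k.choose j : ℤ)) • P.eval ((j:ℝ)) := by
        refine Finset.sum_congr rfl fun j _ => ?_
        rw [heval j, zsmul_eq_mul]
        push_cast
        ring
    _ = 0 := h2

lemma degFall_abs_le (m : ℕ) (lam : ℝ) (n k : ℕ) :
    |degFall ((m : ℝ) * k + 1) lam n| ≤ (((m:ℝ) + 1 + n * |lam|) * (k + 1)) ^ n := by
  set c : ℝ := (m:ℝ) + 1 + n * |lam| with hc
  rw [degFall, Finset.abs_prod]
  calc ∏ i ∈ Finset.range n, |(m:ℝ) * k + 1 - i * lam|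
      ≤ ∏ _i ∈ Finset.range n, c * (k + 1) := by
        refine Finset.prod_le_prod (fun i _ => abs_nonneg _) (fun i hi => ?_)
        have hi' : (i:ℝ) ≤ n := by exact_mod_cast le_of_lt (Finset.mem_range.mp hi)
        have h1 : |(m:ℝ) * k + 1 - i * lam| ≤ (m:ℝ) * k + 1 + i * |lam| := by
          refine le_trans (abs_sub _ _) ?_
          rw [abs_mul, Nat.abs_cast]
          have : |(m:ℝ) * k + 1| = (m:ℝ) * k + 1 := abs_of_nonneg (by positivity)
          rw [this]
        refine le_trans h1 ?_
        have h2 : (i:ℝ) * |lam| ≤ n * |lam| := by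
          exact mul_le_mul_of_nonneg_right hi' (abs_nonneg _)
        have hk0 : (0:ℝ) ≤ k := Nat.cast_nonneg k
        have hl0 : (0:ℝ) ≤ |lam| := abs_nonneg _
        have hm0 : (0:ℝ) ≤ m := Nat.cast_nonneg m
        nlinarith [mul_nonneg (Nat.cast_nonneg n) hl0]
    _ = (c * (k + 1)) ^ n := by rw [Finset.prod_const, Finset.card_range]

lemma term_norm_summable (m : ℕ) (hm : 0 < m) (lam x : ℝ) (n : ℕ) :
    Summable (fun k : ℕ =>
      ‖x ^ k / ((m : ℝ) ^ k * (k.factorial : ℝ)) * degFall ((m : ℝ) * (k : ℝ) + 1) lam n‖) := by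
  set c : ℝ := (m:ℝ) + 1 + n * |lam| with hc
  have hm' : (0:ℝ) < m := by exact_mod_cast hm
  refine Summable.of_nonneg_of_le (fun k => norm_nonneg _)
    (fun k => ?_) (Summable.mul_left (c ^ n)
      (Real.summable_pow_div_factorial ((2:ℝ) ^ n * |x| / m)))
  have hfk := degFall_abs_le m lam n k
  have hkp : ((k:ℝ) + 1) ≤ 2 ^ k := by
    exact_mod_cast (Nat.lt_two_pow_self : k < 2 ^ k)
  have hcnn : (0:ℝ) ≤ c := by positivity
  calc ‖x ^ k / ((m : ℝ) ^ k * (k.factorial : ℝ)) * degFall ((m : ℝ) * (k : ℝ) + 1) lam n‖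
      = |x|^k / ((m:ℝ)^k * k.factorial) * |degFall ((m : ℝ) * (k : ℝ) + 1) lam n| := by
        rw [Real.norm_eq_abs, abs_mul, abs_div, abs_pow, abs_mul, abs_pow, Nat.abs_cast,
          Nat.abs_cast]
    _ ≤ |x|^k / ((m:ℝ)^k * k.factorial) * ((c * (k + 1)) ^ n) := by
        refine mul_le_mul_of_nonneg_left hfk (by positivity)
    _ ≤ c ^ n * (((2:ℝ) ^ n * |x| / m) ^ k / k.factorial) := by
        rw [mul_pow]
        have h1 : ((k:ℝ) + 1) ^ n ≤ ((2:ℝ) ^ n) ^ k := by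
          calc ((k:ℝ) + 1) ^ n ≤ ((2:ℝ) ^ k) ^ n :=
                pow_le_pow_left₀ (by positivity) hkp n
            _ = ((2:ℝ) ^ n) ^ k := by rw [← pow_mul, ← pow_mul, Nat.mul_comm]
        have h2 : |x|^k / ((m:ℝ)^k * k.factorial) * (c ^ n * ((k:ℝ)+1) ^ n)
            ≤ |x|^k / ((m:ℝ)^k * k.factorial) * (c ^ n * ((2:ℝ)^n) ^ k) := by
          refine mul_le_mul_of_nonneg_left (mul_le_mul_of_nonneg_left h1 (by positivity))
            (by positivity)
        refine le_trans h2 (le_of_eq ?_)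
        rw [div_pow, mul_pow]
        field_simp

/-- Dobinski-type formula:
`D_{m,λ}(n,x) = e^{-x/m} Σ_{k=0}^∞ (xᵏ/(mᵏ k!)) (mk+1)_{n,λ}`, with convergence. -/
theorem degDowling_dobinski (m : ℕ) (hm : 0 < m) (lam x : ℝ) (n : ℕ) :
    Summable (fun k : ℕ =>
      x ^ k / ((m : ℝ) ^ k * (k.factorial : ℝ)) * degFall ((m : ℝ) * (k : ℝ) + 1) lam n) ∧
    degDowling m lam n x =
      Real.exp (-x / (m : ℝ)) *
        ∑' k : ℕ,
          x ^ k / ((m : ℝ) ^ k * (k.factorial : ℝ)) * degFall ((m : ℝ) * (k : ℝ) + 1) lam n := by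
  have hm' : (0:ℝ) < m := by exact_mod_cast hm
  set b : ℕ → ℝ := fun k =>
    x ^ k / ((m : ℝ) ^ k * (k.factorial : ℝ)) * degFall ((m : ℝ) * (k : ℝ) + 1) lam n with hb
  set a : ℕ → ℝ := fun j => (-x / m) ^ j / j.factorial with ha
  have hbn : Summable (fun k => ‖b k‖) := term_norm_summable m hm lam x n
  have han : Summable (fun j => ‖a j‖) := by
    refine Summable.congr (Real.summable_pow_div_factorial (|-x / m|)) (fun j => ?_)
    rw [ha, Real.norm_eq_abs]
    simp only
    rw [abs_div (((-x) / (m:ℝ)) ^ j), abs_pow, abs_div]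
    simp [Nat.abs_cast]
  refine ⟨hbn.of_norm, ?_⟩
  have hexp : Real.exp (-x / m) = ∑' j, a j := by
    rw [Real.exp_eq_exp_ℝ, NormedSpace.exp_eq_tsum_div]
  rw [hexp, tsum_mul_tsum_eq_tsum_sum_antidiagonal_of_summable_norm han hbn]
  have hinner : ∀ N : ℕ, (∑ kl ∈ Finset.HasAntidiagonal.antidiagonal N, a kl.1 * b kl.2)
      = degWhitney m lam n N * x ^ N := by
    intro N
    rw [Finset.Nat.sum_antidiagonal_eq_sum_range_succ_mk, ← Finset.sum_range_reflect]
    have hW : degWhitney m lam n N * x ^ N = ∑ k ∈ Finset.range (N + 1),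
        (N.choose k : ℝ) * (-1 : ℝ) ^ (N - k) * degFall ((m : ℝ) * k + 1) lam n
          * x ^ N / ((m:ℝ) ^ N * N.factorial) := by
      rw [degWhitney, Finset.mul_sum, Finset.sum_mul]
      refine Finset.sum_congr rfl (fun j _ => by ring)
    rw [hW]
    refine Finset.sum_congr rfl (fun k hk => ?_)
    have hkN : k ≤ N := Nat.lt_succ_iff.mp (Finset.mem_range.mp hk)
    have hre : N + 1 - 1 - k = N - k := by omega
    rw [hre]
    have h1 : x ^ (N - k) * x ^ k = x ^ N := by rw [← pow_add, Nat.sub_add_cancel hkN]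
    have h2 : (m:ℝ) ^ (N - k) * m ^ k = m ^ N := by rw [← pow_add, Nat.sub_add_cancel hkN]
    have h3 : ((N.choose k : ℝ)) * k.factorial * (N - k).factorial = N.factorial := by
      exact_mod_cast Nat.choose_mul_factorial_mul_factorial hkN
    have hf1 : ((N - k).factorial : ℝ) ≠ 0 := Nat.cast_ne_zero.mpr (Nat.factorial_ne_zero _)
    have hf2 : ((k).factorial : ℝ) ≠ 0 := Nat.cast_ne_zero.mpr (Nat.factorial_ne_zero _)
    have hf3 : ((N).factorial : ℝ) ≠ 0 := Nat.cast_ne_zero.mpr (Nat.factorial_ne_zero _)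
    have hmne : (m:ℝ) ≠ 0 := ne_of_gt hm'
    have hch : (N.choose k : ℝ) ≠ 0 := Nat.cast_ne_zero.mpr (Nat.choose_pos hkN).ne'
    rw [ha, hb]
    simp only
    rw [← h1, ← h2, ← h3, div_pow, neg_pow]
    field_simp
    rw [Nat.sub_sub_self hkN]
    ring
  rw [tsum_congr hinner]
  have hzero : ∀ N ∉ Finset.range (n + 1), degWhitney m lam n N * x ^ N = 0 := by
    intro N hN
    have : n < N := by simpa using hN
    rw [degWhitney, whitney_sum_zero m lam n N this, mul_zero, zero_mul]
  rw [tsum_eq_sum hzero, degDowling]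
end

section
/- Dobinski-type formula for degenerate r-Dowling polynomials: with W^{(r)}_{m,λ}(n,k) = (1/(m^k k!)) Σ_{j=0}^{k} C(k,j)(-1)^{k-j}(mj+r)_{n,λ} and D^{(r)}_{m,λ}(n,x) = Σ_{k=0}^{n} W^{(r)}_{m,λ}(n,k) x^k, for every real x, nonnegative integer r, positive integer m and n ≥ 0, the series Σ_{k=0}^{∞} (x^k/(m^k k!)) (mk+r)_{n,λ} converges and D^{(r)}_{m,λ}(n,x) = e^{-x/m} Σ_{k=0}^{∞} (x^k/(m^k k!)) (mk+r)_{n,λ}. -/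
/-- The degenerate r-Dowling polynomials `D^{(r)}_{m,λ}(n,x) = Σ_{k=0}^n W^{(r)}_{m,λ}(n,k) xᵏ`. -/
noncomputable def degRDowling (m r : ℕ) (lam : ℝ) (n : ℕ) (x : ℝ) : ℝ :=
  ∑ k ∈ Finset.range (n + 1), degRWhitney m r lam n k * x ^ k

open Finset Polynomial fwdDiff

lemma fwdDiff_eval_poly (p : ℝ[X]) :
    Δ_[(1:ℕ)] (fun j : ℕ => p.eval (j:ℝ)) =
      fun j : ℕ => (p.comp (X + C 1) - p).eval (j:ℝ) := by
  funext j
  simp only [fwdDiff, eval_comp, eval_add, eval_X, eval_C, eval_sub]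
  push_cast
  ring

lemma fwdDiff_iter_poly_zero_s10 : ∀ (d : ℕ) (p : ℝ[X]), p.natDegree ≤ d →
    (Δ_[(1:ℕ)])^[d+1] (fun j : ℕ => p.eval (j:ℝ)) = fun _ => (0:ℝ) := by
  intro d
  induction d with
  | zero =>
    intro p hp
    obtain ⟨a, rfl⟩ := Polynomial.natDegree_eq_zero.mp (Nat.le_zero.mp hp)
    simp [Function.iterate_one]
  | succ d IH =>
    intro p hp
    set q : ℝ[X] := p.comp (X + C 1) - p with hq
    have h1 : (X + C (1:ℝ)).natDegree = 1 := natDegree_X_add_C 1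
    have hc : (p.comp (X + C 1)).natDegree = p.natDegree := by
      rw [Polynomial.natDegree_comp, h1, mul_one]
    have hqd : q.natDegree ≤ d := by
      by_cases h0 : p.natDegree = 0
      · obtain ⟨a, rfl⟩ := Polynomial.natDegree_eq_zero.mp h0
        simp [hq]
      · by_cases hq0 : q = 0
        · simp [hq0]
        have hp0 : p ≠ 0 := fun h => h0 (by simp [h])
        have hcomp0 : p.comp (X + C 1) ≠ 0 := fun h => by
          rw [h, natDegree_zero] at hc; exact h0 hc.symm
        have hdeg : (p.comp (X + C 1)).degree = p.degree := by
          rw [Polynomial.degree_eq_natDegree hcomp0, Polynomial.degree_eq_natDegree hp0, hc]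
        have hlc : (p.comp (X + C 1)).leadingCoeff = p.leadingCoeff := by
          rw [Polynomial.leadingCoeff_comp (by rw [h1]; exact one_ne_zero)]
          rw [(monic_X_add_C (1:ℝ)).leadingCoeff, one_pow, mul_one]
        have hlt : q.degree < (p.comp (X + C 1)).degree :=
          Polynomial.degree_sub_lt hdeg hcomp0 hlc
        have h2 : q.natDegree < (p.comp (X + C 1)).natDegree :=
          Polynomial.natDegree_lt_natDegree hq0 hlt
        omega
    have hstep : (Δ_[(1:ℕ)])^[d+1+1] (fun j : ℕ => p.eval (j:ℝ))
        = (Δ_[(1:ℕ)])^[d+1] (fun j : ℕ => q.eval (j:ℝ)) := by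
      rw [Function.iterate_succ_apply, fwdDiff_eval_poly]
    rw [hstep]
    exact IH q hqd

lemma choose_le_two_pow' (k j : ℕ) : k.choose j ≤ 2 ^ k := by
  by_cases h : j ≤ k
  · calc k.choose j ≤ ∑ m ∈ range (k+1), k.choose m :=
        Finset.single_le_sum (fun i _ => Nat.zero_le _) (mem_range.mpr (Nat.lt_succ_of_le h))
    _ = 2 ^ k := Nat.sum_range_choose k
  · rw [Nat.choose_eq_zero_of_lt (not_le.mp h)]; exact Nat.zero_le _

lemma summable_choose (j : ℕ) (t : ℝ) :
    Summable (fun k : ℕ => (k.choose j : ℝ) * t ^ k / k.factorial) := by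
  apply Summable.of_abs
  refine Summable.of_nonneg_of_le (fun k => abs_nonneg _) (fun k => ?_)
    (Real.summable_pow_div_factorial (2 * |t|))
  rw [abs_div, abs_mul, abs_pow, Nat.abs_cast, Nat.abs_cast, mul_pow]
  gcongr
  exact_mod_cast choose_le_two_pow' k j

lemma real_exp_tsum (t : ℝ) : Real.exp t = ∑' n : ℕ, t ^ n / n.factorial := by
  rw [Real.exp_eq_exp_ℝ, NormedSpace.exp_eq_tsum_div]

lemma tsum_choose_eq (j : ℕ) (t : ℝ) :
    ∑' k : ℕ, (k.choose j : ℝ) * t ^ k / k.factorial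
      = t ^ j / j.factorial * Real.exp t := by
  have hs := summable_choose j t
  rw [← hs.sum_add_tsum_nat_add j, Finset.sum_eq_zero (fun i hi => by
    rw [Nat.choose_eq_zero_of_lt (mem_range.mp hi)]; simp), zero_add]
  have key : ∀ i : ℕ, ((i+j).choose j : ℝ) * t^(i+j) / (i+j).factorial
      = t^j / j.factorial * (t^i / i.factorial) := by
    intro i
    have hfact : ((i+j).choose j : ℝ) * ((j.factorial : ℝ) * i.factorial)
        = (i+j).factorial := by
      rw [mul_comm (j.factorial : ℝ), ← mul_assoc]
      exact_mod_cast Nat.add_choose_mul_factorial_mul_factorial i j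
    have h1 : ((i+j).factorial : ℝ) ≠ 0 := Nat.cast_ne_zero.mpr (Nat.factorial_ne_zero _)
    have h2 : (j.factorial : ℝ) ≠ 0 := Nat.cast_ne_zero.mpr (Nat.factorial_ne_zero _)
    have h3 : (i.factorial : ℝ) ≠ 0 := Nat.cast_ne_zero.mpr (Nat.factorial_ne_zero _)
    field_simp
    linear_combination t ^ (i + j) * hfact
  rw [tsum_congr key, tsum_mul_left, real_exp_tsum t]

/-- Dobinski-type formula:
`D^{(r)}_{m,λ}(n,x) = e^{-x/m} Σ_{k=0}^∞ (xᵏ/(mᵏ k!)) (mk+r)_{n,λ}`, with convergence. -/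
theorem degRDowling_dobinski (m : ℕ) (hm : 0 < m) (r : ℕ) (lam x : ℝ) (n : ℕ) :
    Summable (fun k : ℕ =>
      x ^ k / ((m : ℝ) ^ k * (k.factorial : ℝ)) * degFall ((m : ℝ) * (k : ℝ) + (r : ℝ)) lam n) ∧
    degRDowling m r lam n x =
      Real.exp (-x / (m : ℝ)) *
        ∑' k : ℕ,
          x ^ k / ((m : ℝ) ^ k * (k.factorial : ℝ)) *
            degFall ((m : ℝ) * (k : ℝ) + (r : ℝ)) lam n := by
  have hm0 : (m:ℝ) ≠ 0 := Nat.cast_ne_zero.mpr hm.ne'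
  set t : ℝ := x / m with ht
  set f : ℕ → ℝ := fun j : ℕ => degFall ((m : ℝ) * (j : ℝ) + (r : ℝ)) lam n with hf
  set D : ℕ → ℝ := fun j : ℕ => (Δ_[(1:ℕ)])^[j] f 0 with hD
  have hDapp : ∀ j : ℕ, D j = (Δ_[(1:ℕ)])^[j] f 0 := fun j => rfl
  -- polynomial representation of f
  set p : ℝ[X] := ∏ i ∈ range n, (C (m:ℝ) * X + C ((r:ℝ) - i * lam)) with hp
  have hpd : p.natDegree ≤ n := by
    refine le_trans (natDegree_prod_le _ _) ?_
    refine le_trans (Finset.sum_le_sum (g := fun _ : ℕ => 1) (fun i _ => natDegree_linear_le)) ?_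
    simp
  have hpe : f = fun j : ℕ => p.eval (j:ℝ) := by
    funext j
    rw [hf, hp]
    simp only [eval_prod, eval_add, eval_mul, eval_C, eval_X, degFall]
    exact Finset.prod_congr rfl (fun i _ => by ring)
  -- vanishing of higher differences
  have hDzero : ∀ j : ℕ, n < j → D j = 0 := by
    intro j hj
    have hsplit : (Δ_[(1:ℕ)])^[j] f = fun _ => (0:ℝ) := by
      rw [show j = (j - (n+1)) + (n+1) by omega, Function.iterate_add_apply, hpe,
        fwdDiff_iter_poly_zero_s10 n p hpd]
      exact Function.iterate_fixed (fwdDiff_const 1 (0:ℝ)) _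
    rw [hDapp, hsplit]
  -- Whitney numbers from differences
  have hDsum : ∀ k : ℕ, D k =
      ∑ j ∈ range (k+1), (k.choose j : ℝ) * (-1:ℝ) ^ (k - j) * f j := by
    intro k
    rw [hDapp, fwdDiff_iter_eq_sum_shift]
    refine Finset.sum_congr rfl (fun j hj => ?_)
    have hj1 : (0 + j • (1:ℕ)) = j := by simp
    rw [hj1, zsmul_eq_mul]
    push_cast
    ring
  have hW : ∀ k : ℕ, degRWhitney m r lam n k = D k / ((m:ℝ) ^ k * k.factorial) := by
    intro k
    rw [degRWhitney, hDsum k, one_div, div_eq_inv_mul]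
  -- Newton expansion of f
  have hNewton : ∀ k : ℕ, f k = ∑ j ∈ range (n+1), (k.choose j : ℝ) * D j := by
    intro k
    have h1 := shift_eq_sum_fwdDiff_iter (1:ℕ) f k 0
    have h01 : (0 + k • (1:ℕ)) = k := by simp
    rw [h01] at h1
    have h2 : f k = ∑ j ∈ range (k+1), (k.choose j : ℝ) * D j := by
      rw [h1]
      exact Finset.sum_congr rfl (fun j _ => by rw [nsmul_eq_mul, hD])
    set M := max k n with hM
    have h3 : ∑ j ∈ range (k+1), (k.choose j : ℝ) * D j
        = ∑ j ∈ range (M+1), (k.choose j : ℝ) * D j := by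
      refine Finset.sum_subset (by simp [Finset.range_subset]; omega) (fun j _ hj => ?_)
      rw [Nat.choose_eq_zero_of_lt (by simp at hj; omega)]
      simp
    have h4 : ∑ j ∈ range (n+1), (k.choose j : ℝ) * D j
        = ∑ j ∈ range (M+1), (k.choose j : ℝ) * D j := by
      refine Finset.sum_subset (by simp [Finset.range_subset]; omega) (fun j _ hj => ?_)
      rw [hDzero j (by simp at hj; omega)]
      simp
    rw [h2, h3, ← h4]
  -- term-wise expansion of the series
  have hterm : ∀ k : ℕ, x ^ k / ((m : ℝ) ^ k * (k.factorial : ℝ)) * f k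
      = ∑ j ∈ range (n+1), D j * ((k.choose j : ℝ) * t ^ k / k.factorial) := by
    intro k
    have hx : x ^ k = t ^ k * (m:ℝ) ^ k := by
      rw [ht, div_pow, div_mul_cancel₀]
      exact pow_ne_zero _ hm0
    rw [hNewton k, Finset.mul_sum]
    refine Finset.sum_congr rfl (fun j _ => ?_)
    have hk : ((k.factorial : ℝ)) ≠ 0 := Nat.cast_ne_zero.mpr (Nat.factorial_ne_zero _)
    have hmk : ((m:ℝ)) ^ k ≠ 0 := pow_ne_zero _ hm0
    rw [hx]
    field_simp
  have hsp : ∀ j ∈ range (n+1),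
      Summable (fun k : ℕ => D j * ((k.choose j : ℝ) * t ^ k / k.factorial)) :=
    fun j _ => (summable_choose j t).mul_left (D j)
  have hsum : Summable (fun k : ℕ =>
      x ^ k / ((m : ℝ) ^ k * (k.factorial : ℝ)) * f k) := by
    rw [funext hterm]
    exact summable_sum hsp
  refine ⟨hsum, ?_⟩
  have htsum : ∑' k : ℕ, x ^ k / ((m : ℝ) ^ k * (k.factorial : ℝ)) * f k
      = ∑ j ∈ range (n+1), D j * (t ^ j / j.factorial * Real.exp t) := by
    rw [tsum_congr hterm, Summable.tsum_finsetSum hsp]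
    exact Finset.sum_congr rfl (fun j _ => by rw [tsum_mul_left, tsum_choose_eq])
  rw [htsum, degRDowling, Finset.mul_sum]
  refine Finset.sum_congr rfl (fun j hj => ?_)
  rw [hW j]
  have hk : ((j.factorial : ℝ)) ≠ 0 := Nat.cast_ne_zero.mpr (Nat.factorial_ne_zero _)
  have hmj : ((m:ℝ)) ^ j ≠ 0 := pow_ne_zero _ hm0
  have hexp : Real.exp (-x / (m:ℝ)) * Real.exp t = 1 := by
    rw [← Real.exp_add, neg_div, neg_add_cancel, Real.exp_zero]
  have hx : x ^ j = t ^ j * (m:ℝ) ^ j := by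
    rw [ht, div_pow, div_mul_cancel₀]
    exact pow_ne_zero _ hm0
  calc D j / ((m:ℝ) ^ j * j.factorial) * x ^ j
      = (Real.exp (-x / (m:ℝ)) * Real.exp t) * (D j / ((m:ℝ) ^ j * j.factorial) * x ^ j) := by
        rw [hexp, one_mul]
    _ = Real.exp (-x / (m:ℝ)) * (D j * (t ^ j / j.factorial * Real.exp t)) := by
        rw [hx]; field_simp
end

section
/- Convolution identity showing the degenerate Dowling polynomials fail the binomial identity (Theorem 2.9, Y = 1): with D_{m,λ}(n,x) = Σ_{k=0}^{n} W_{m,λ}(n,k) x^k where W_{m,λ}(n,k) = (1/(m^k k!)) Σ_{j=0}^{k} C(k,j)(-1)^{k-j}(mj+1)_{n,λ}, one has for all n ≥ 0 and all x, y: Σ_{k=0}^{n} C(n,k) (1)_{n-k,λ} D_{m,λ}(k, x+y) = Σ_{k=0}^{n} C(n,k) D_{m,λ}(n-k, x) D_{m,λ}(k, y). -/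
open Finset

lemma degFall_zero (x lam : ℝ) : degFall x lam 0 = 1 := by simp [degFall]

lemma degFall_succ (x lam : ℝ) (n : ℕ) :
    degFall x lam (n + 1) = degFall x lam n * (x - n * lam) := by
  simp [degFall, Finset.prod_range_succ]

lemma degFall_add (a b lam : ℝ) (n : ℕ) :
    degFall (a + b) lam n =
      ∑ k ∈ Finset.range (n + 1), (n.choose k : ℝ) * degFall a lam k * degFall b lam (n - k) := by
  induction n with
  | zero => simp [degFall]
  | succ n IH =>
    set f : ℕ → ℝ := fun k => (n.choose k : ℝ) * degFall a lam k * degFall b lam (n + 1 - k) with hf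
    have hsplit : ∑ k ∈ Finset.range (n + 2),
          ((n+1).choose k : ℝ) * degFall a lam k * degFall b lam (n + 1 - k)
        = (∑ k ∈ Finset.range (n + 1),
            (n.choose k : ℝ) * degFall a lam (k+1) * degFall b lam (n - k))
          + ∑ k ∈ Finset.range (n + 1), f k := by
      rw [Finset.sum_range_succ' _ (n+1)]
      have h1 : ∀ k ∈ Finset.range (n + 1),
          (((n+1).choose (k+1) : ℝ)) * degFall a lam (k+1) * degFall b lam (n + 1 - (k+1))
          = (n.choose k : ℝ) * degFall a lam (k+1) * degFall b lam (n - k)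
            + f (k+1) := by
        intro k hk
        rw [Nat.choose_succ_succ, hf]
        have h5 : n + 1 - (k+1) = n - k := by omega
        push_cast [h5]
        ring
      rw [Finset.sum_congr rfl h1, Finset.sum_add_distrib, add_assoc]
      congr 1
      have h2 : ((n+1).choose 0 : ℝ) * degFall a lam 0 * degFall b lam (n + 1 - 0) = f 0 := by
        simp [hf]
      rw [h2, ← Finset.sum_range_succ' f (n+1), Finset.sum_range_succ]
      simp [hf, Nat.choose_succ_self]
    rw [hsplit, degFall_succ, IH, Finset.sum_mul, ← Finset.sum_add_distrib]
    refine Finset.sum_congr rfl fun k hk => ?_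
    rw [Finset.mem_range] at hk
    show _ = _ + (n.choose k : ℝ) * degFall a lam k * degFall b lam (n + 1 - k)
    have h3 : n + 1 - k = (n - k) + 1 := by omega
    rw [h3, degFall_succ b lam (n-k), degFall_succ a lam k]
    have h4 : ((n - k : ℕ) : ℝ) = (n : ℝ) - (k : ℝ) := by
      push_cast [Nat.cast_sub (Nat.le_of_lt_succ hk)]; ring
    rw [h4]; ring

lemma fwdDiff_iter_sum_apply {α : Type*} (s : Finset α) (h : α → ℕ → ℝ) (k : ℕ) (y : ℕ) :
    (fwdDiff (1:ℕ))^[k] (fun j => ∑ r ∈ s, h r j) y = ∑ r ∈ s, (fwdDiff (1:ℕ))^[k] (h r) y := by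
  have e : (fun j => ∑ r ∈ s, h r j) = ∑ r ∈ s, h r := by funext j; simp
  rw [e, fwdDiff_iter_finset_sum]; simp

lemma fwdDiff_iter_mul_apply (a b : ℝ) (F : ℕ → ℝ) (k : ℕ) (y : ℕ) :
    (fwdDiff (1:ℕ))^[k] (fun j => a * F j * b) y = a * (fwdDiff (1:ℕ))^[k] F y * b := by
  have e : (fun j => a * F j * b) = (a * b) • F := by
    funext j; simp [smul_eq_mul]; ring
  rw [e, fwdDiff_iter_const_smul]
  simp [smul_eq_mul]; ring

lemma fwdDiff_vanish (μ c lam : ℝ) :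
    ∀ n k : ℕ, n ≤ k →
      (fwdDiff (1:ℕ))^[k+1] (fun j : ℕ => degFall (μ * (j:ℝ) + c) lam n) 0 = 0 := by
  intro n
  induction n using Nat.strong_induction_on with
  | _ n IH =>
    intro k hk
    have hΔ : fwdDiff (1:ℕ) (fun j : ℕ => degFall (μ * (j:ℝ) + c) lam n)
        = fun j : ℕ => ∑ r ∈ Finset.range n,
            (n.choose r : ℝ) * degFall (μ * (j:ℝ) + c) lam r * degFall μ lam (n - r) := by
      funext j
      show degFall (μ * ((j+1 : ℕ):ℝ) + c) lam n - degFall (μ * (j:ℝ) + c) lam n = _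
      have h1 : μ * ((j+1 : ℕ):ℝ) + c = (μ * (j:ℝ) + c) + μ := by push_cast; ring
      rw [h1, degFall_add, Finset.sum_range_succ]
      simp [degFall_zero]
    rw [Function.iterate_succ_apply, hΔ, fwdDiff_iter_sum_apply]
    refine Finset.sum_eq_zero fun r hr => ?_
    rw [Finset.mem_range] at hr
    rw [fwdDiff_iter_mul_apply]
    have hk1 : k - 1 + 1 = k := by omega
    have h0 := IH r hr (k-1) (by omega)
    rw [hk1] at h0
    rw [h0]
    ring

lemma fwdDiff_iter_const_mul_apply (a : ℝ) (F : ℕ → ℝ) (k : ℕ) (y : ℕ) :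
    (fwdDiff (1:ℕ))^[k] (fun j => a * F j) y = a * (fwdDiff (1:ℕ))^[k] F y := by
  have e : (fun j => a * F j) = a • F := by
    funext j; simp [smul_eq_mul]
  rw [e, fwdDiff_iter_const_smul]
  simp [smul_eq_mul]

lemma fwdDiff_iter_comp (p q : ℕ) (g : ℕ → ℝ) :
    (fwdDiff (1:ℕ))^[p] (fun j => (fwdDiff (1:ℕ))^[q] (fun i => g (j + i)) 0) 0
      = (fwdDiff (1:ℕ))^[p+q] g 0 := by
  have e : (fun j => (fwdDiff (1:ℕ))^[q] (fun i => g (j + i)) 0) = (fwdDiff (1:ℕ))^[q] g := by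
    funext j
    rw [fwdDiff_iter_eq_sum_shift, fwdDiff_iter_eq_sum_shift]
    simp
  rw [e, ← Function.iterate_add_apply]

lemma sum_alt_eq (k : ℕ) (g : ℕ → ℝ) :
    ∑ j ∈ Finset.range (k + 1), (k.choose j : ℝ) * (-1 : ℝ) ^ (k - j) * g j
      = (fwdDiff (1:ℕ))^[k] g 0 := by
  rw [fwdDiff_iter_eq_sum_shift]
  refine Finset.sum_congr rfl fun j _ => ?_
  rw [zsmul_eq_mul, smul_eq_mul, mul_one, zero_add]
  push_cast
  ring

lemma degWhitney_eq (m : ℕ) (lam : ℝ) (n k : ℕ) :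
    degWhitney m lam n k = (1 / ((m : ℝ) ^ k * (k.factorial : ℝ))) *
      (fwdDiff (1:ℕ))^[k] (fun j : ℕ => degFall ((m:ℝ) * (j:ℝ) + 1) lam n) 0 := by
  rw [degWhitney, sum_alt_eq]

lemma degWhitney_vanish (m : ℕ) (lam : ℝ) {n k : ℕ} (h : n < k) :
    degWhitney m lam n k = 0 := by
  rw [degWhitney_eq]
  have hk1 : k - 1 + 1 = k := by omega
  have h0 := fwdDiff_vanish (m:ℝ) 1 lam n (k-1) (by omega)
  rw [hk1] at h0
  rw [h0, mul_zero]

lemma degDowling_pad (m : ℕ) (lam : ℝ) {k N : ℕ} (h : k ≤ N) (x : ℝ) :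
    degDowling m lam k x = ∑ p ∈ Finset.range (N + 1), degWhitney m lam k p * x ^ p := by
  rw [degDowling]
  refine Finset.sum_subset (Finset.range_subset_range.mpr (by omega)) fun p hp hnp => ?_
  rw [Finset.mem_range] at hp hnp
  rw [degWhitney_vanish m lam (by omega), zero_mul]

/-- `Σ_{k=0}^n C(n,k) (1)_{n-k,λ} D_{m,λ}(k,x+y) = Σ_{k=0}^n C(n,k) D_{m,λ}(n-k,x) D_{m,λ}(k,y)`. -/
theorem degDowling_convolution (m : ℕ) (hm : 0 < m) (lam : ℝ) (n : ℕ) (x y : ℝ) :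
    ∑ k ∈ Finset.range (n + 1),
        (n.choose k : ℝ) * degFall 1 lam (n - k) * degDowling m lam k (x + y) =
      ∑ k ∈ Finset.range (n + 1),
        (n.choose k : ℝ) * degDowling m lam (n - k) x * degDowling m lam k y := by
  have hm0 : (m:ℝ) ≠ 0 := Nat.cast_ne_zero.mpr hm.ne'
  set G : ℕ → ℝ := fun s => degFall ((m:ℝ) * (s:ℝ) + 2) lam n with hG
  set cc : ℕ → ℝ := fun p => 1 / ((m:ℝ)^p * (p.factorial : ℝ)) with hcc
  set Φ : ℕ → ℕ → ℝ := fun a b => cc a * cc b * x^a * y^b * (fwdDiff (1:ℕ))^[a+b] G 0 with hΦ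
  have hGvan : ∀ t : ℕ, n < t → (fwdDiff (1:ℕ))^[t] G 0 = 0 := by
    intro t ht
    have hk1 : t - 1 + 1 = t := by omega
    have h0 := fwdDiff_vanish (m:ℝ) 2 lam n (t-1) (by omega)
    rw [hk1] at h0
    exact h0
  have hΦvan : ∀ a b : ℕ, n < a + b → Φ a b = 0 := by
    intro a b h; rw [hΦ]; simp only []; rw [hGvan _ h, mul_zero]
  -- key Vandermonde computations
  have key1 : ∀ j : ℕ, (∑ k ∈ Finset.range (n+1),
      ((n.choose k : ℝ) * degFall 1 lam (n-k)) * degFall ((m:ℝ)*(j:ℝ)+1) lam k) = G j := by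
    intro j
    have h2 : (m:ℝ)*(j:ℝ)+2 = ((m:ℝ)*(j:ℝ)+1) + 1 := by ring
    rw [hG]; simp only []
    rw [h2, degFall_add]
    exact Finset.sum_congr rfl fun k _ => by ring
  have key2 : ∀ j i : ℕ, (∑ k ∈ Finset.range (n+1),
      ((n.choose k : ℝ) * degFall ((m:ℝ)*(j:ℝ)+1) lam (n-k)) * degFall ((m:ℝ)*(i:ℝ)+1) lam k)
      = G (j + i) := by
    intro j i
    have h2 : (m:ℝ)*((j+i:ℕ):ℝ)+2 = ((m:ℝ)*(i:ℝ)+1) + ((m:ℝ)*(j:ℝ)+1) := by push_cast; ring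
    rw [hG]; simp only []
    rw [h2, degFall_add]
    exact Finset.sum_congr rfl fun k _ => by ring
  -- cc splitting
  have cc_split : ∀ a p : ℕ, a ≤ p → (p.choose a : ℝ) * cc p = cc a * cc (p - a) := by
    intro a p h
    rw [hcc]; simp only []
    have hnat : a.factorial * (p-a).factorial * p.choose a = p.factorial := by
      rw [← Nat.choose_mul_factorial_mul_factorial h]; ring
    have hfact : (a.factorial : ℝ) * ((p-a).factorial : ℝ) * (p.choose a : ℝ) = (p.factorial : ℝ) := by
      exact_mod_cast hnat
    have hpow : (m:ℝ)^a * (m:ℝ)^(p-a) = (m:ℝ)^p := by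
      rw [← pow_add]; congr 1; omega
    field_simp
    rw [← hpow, ← hfact]
    ring
  -- LHS transformation
  have hL : ∑ k ∈ Finset.range (n + 1),
        (n.choose k : ℝ) * degFall 1 lam (n - k) * degDowling m lam k (x + y)
      = ∑ p ∈ Finset.range (n+1), cc p * (x+y)^p * (fwdDiff (1:ℕ))^[p] G 0 := by
    calc ∑ k ∈ Finset.range (n + 1),
          (n.choose k : ℝ) * degFall 1 lam (n - k) * degDowling m lam k (x + y)
        = ∑ k ∈ Finset.range (n+1), ∑ p ∈ Finset.range (n+1),
            ((n.choose k : ℝ) * degFall 1 lam (n-k)) * (degWhitney m lam k p * (x+y)^p) := by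
          refine Finset.sum_congr rfl fun k hk => ?_
          rw [Finset.mem_range] at hk
          rw [degDowling_pad m lam (by omega : k ≤ n), Finset.mul_sum]
      _ = ∑ p ∈ Finset.range (n+1), ∑ k ∈ Finset.range (n+1),
            ((n.choose k : ℝ) * degFall 1 lam (n-k)) * (degWhitney m lam k p * (x+y)^p) :=
          Finset.sum_comm
      _ = ∑ p ∈ Finset.range (n+1), cc p * (x+y)^p * (fwdDiff (1:ℕ))^[p] G 0 := by
          refine Finset.sum_congr rfl fun p hp => ?_
          have e1 : ∀ k ∈ Finset.range (n+1),
              ((n.choose k : ℝ) * degFall 1 lam (n-k)) * (degWhitney m lam k p * (x+y)^p)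
              = (cc p * (x+y)^p) * (((n.choose k : ℝ) * degFall 1 lam (n-k)) *
                  (fwdDiff (1:ℕ))^[p] (fun j : ℕ => degFall ((m:ℝ)*(j:ℝ)+1) lam k) 0) := by
            intro k _
            rw [degWhitney_eq, hcc]
            ring
          rw [Finset.sum_congr rfl e1, ← Finset.mul_sum]
          have e2 : ∀ k ∈ Finset.range (n+1),
              ((n.choose k : ℝ) * degFall 1 lam (n-k)) *
                  (fwdDiff (1:ℕ))^[p] (fun j : ℕ => degFall ((m:ℝ)*(j:ℝ)+1) lam k) 0
              = (fwdDiff (1:ℕ))^[p]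
                  (fun j : ℕ => ((n.choose k : ℝ) * degFall 1 lam (n-k)) *
                    degFall ((m:ℝ)*(j:ℝ)+1) lam k) 0 :=
            fun k _ => (fwdDiff_iter_const_mul_apply _ _ _ _).symm
          rw [Finset.sum_congr rfl e2, ← fwdDiff_iter_sum_apply]
          have efun : (fun j : ℕ => ∑ k ∈ Finset.range (n+1),
              ((n.choose k : ℝ) * degFall 1 lam (n-k)) * degFall ((m:ℝ)*(j:ℝ)+1) lam k) = G :=
            funext fun j => key1 j
          rw [efun]
  -- RHS transformation
  have hR : ∑ k ∈ Finset.range (n + 1),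
        (n.choose k : ℝ) * degDowling m lam (n - k) x * degDowling m lam k y
      = ∑ p ∈ Finset.range (n+1), ∑ q ∈ Finset.range (n+1), Φ p q := by
    calc ∑ k ∈ Finset.range (n + 1),
          (n.choose k : ℝ) * degDowling m lam (n - k) x * degDowling m lam k y
        = ∑ k ∈ Finset.range (n+1), ∑ p ∈ Finset.range (n+1), ∑ q ∈ Finset.range (n+1),
            (n.choose k : ℝ) * (degWhitney m lam (n-k) p * x^p) * (degWhitney m lam k q * y^q) := by
          refine Finset.sum_congr rfl fun k hk => ?_
          rw [Finset.mem_range] at hk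
          rw [degDowling_pad m lam (by omega : n - k ≤ n) x,
              degDowling_pad m lam (by omega : k ≤ n) y]
          rw [mul_assoc, Finset.sum_mul_sum, Finset.mul_sum]
          refine Finset.sum_congr rfl fun p _ => ?_
          rw [Finset.mul_sum]
          refine Finset.sum_congr rfl fun q _ => ?_
          ring
      _ = ∑ p ∈ Finset.range (n+1), ∑ q ∈ Finset.range (n+1), ∑ k ∈ Finset.range (n+1),
            (n.choose k : ℝ) * (degWhitney m lam (n-k) p * x^p) * (degWhitney m lam k q * y^q) := by
          rw [Finset.sum_comm]
          refine Finset.sum_congr rfl fun p _ => Finset.sum_comm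
      _ = ∑ p ∈ Finset.range (n+1), ∑ q ∈ Finset.range (n+1), Φ p q := by
          refine Finset.sum_congr rfl fun p _ => Finset.sum_congr rfl fun q _ => ?_
          have e1 : ∀ k ∈ Finset.range (n+1),
              (n.choose k : ℝ) * (degWhitney m lam (n-k) p * x^p) * (degWhitney m lam k q * y^q)
              = (cc p * cc q * x^p * y^q) *
                  (((n.choose k : ℝ) *
                    (fwdDiff (1:ℕ))^[q] (fun i : ℕ => degFall ((m:ℝ)*(i:ℝ)+1) lam k) 0) *
                    (fwdDiff (1:ℕ))^[p] (fun j : ℕ => degFall ((m:ℝ)*(j:ℝ)+1) lam (n-k)) 0) := by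
            intro k _
            rw [degWhitney_eq, degWhitney_eq, hcc]
            ring
          rw [Finset.sum_congr rfl e1, ← Finset.mul_sum]
          have e2 : ∀ k ∈ Finset.range (n+1),
              ((n.choose k : ℝ) *
                  (fwdDiff (1:ℕ))^[q] (fun i : ℕ => degFall ((m:ℝ)*(i:ℝ)+1) lam k) 0) *
                  (fwdDiff (1:ℕ))^[p] (fun j : ℕ => degFall ((m:ℝ)*(j:ℝ)+1) lam (n-k)) 0
              = (fwdDiff (1:ℕ))^[p] (fun j : ℕ =>
                  ((n.choose k : ℝ) *
                    (fwdDiff (1:ℕ))^[q] (fun i : ℕ => degFall ((m:ℝ)*(i:ℝ)+1) lam k) 0) *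
                  degFall ((m:ℝ)*(j:ℝ)+1) lam (n-k)) 0 :=
            fun k _ => (fwdDiff_iter_const_mul_apply _ _ _ _).symm
          rw [Finset.sum_congr rfl e2, ← fwdDiff_iter_sum_apply]
          have e3 : (fun j : ℕ => ∑ k ∈ Finset.range (n+1),
                ((n.choose k : ℝ) *
                  (fwdDiff (1:ℕ))^[q] (fun i : ℕ => degFall ((m:ℝ)*(i:ℝ)+1) lam k) 0) *
                degFall ((m:ℝ)*(j:ℝ)+1) lam (n-k))
              = (fun j : ℕ => (fwdDiff (1:ℕ))^[q] (fun i : ℕ => G (j + i)) 0) := by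
            funext j
            have e4 : ∀ k ∈ Finset.range (n+1),
                ((n.choose k : ℝ) *
                  (fwdDiff (1:ℕ))^[q] (fun i : ℕ => degFall ((m:ℝ)*(i:ℝ)+1) lam k) 0) *
                degFall ((m:ℝ)*(j:ℝ)+1) lam (n-k)
                = (fwdDiff (1:ℕ))^[q] (fun i : ℕ =>
                    ((n.choose k : ℝ) * degFall ((m:ℝ)*(j:ℝ)+1) lam (n-k)) *
                      degFall ((m:ℝ)*(i:ℝ)+1) lam k) 0 := by
              intro k _
              rw [fwdDiff_iter_const_mul_apply]
              ring
            rw [Finset.sum_congr rfl e4, ← fwdDiff_iter_sum_apply]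
            have efun2 : (fun i : ℕ => ∑ k ∈ Finset.range (n+1),
                ((n.choose k : ℝ) * degFall ((m:ℝ)*(j:ℝ)+1) lam (n-k)) *
                  degFall ((m:ℝ)*(i:ℝ)+1) lam k)
                = (fun i : ℕ => G (j + i)) := funext fun i => key2 j i
            rw [efun2]
          rw [e3, fwdDiff_iter_comp, hΦ]
  rw [hL, hR]
  -- expand (x+y)^p and reindex
  have hL2 : ∑ p ∈ Finset.range (n+1), cc p * (x+y)^p * (fwdDiff (1:ℕ))^[p] G 0
      = ∑ p ∈ Finset.range (n+1), ∑ a ∈ Finset.range (p+1), Φ a (p - a) := by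
    refine Finset.sum_congr rfl fun p _ => ?_
    rw [add_pow, Finset.mul_sum, Finset.sum_mul]
    refine Finset.sum_congr rfl fun a ha => ?_
    rw [Finset.mem_range] at ha
    have hap : a ≤ p := by omega
    have hsplit := cc_split a p hap
    have hpa : a + (p - a) = p := by omega
    rw [hΦ]
    show _ = cc a * cc (p-a) * x ^ a * y ^ (p-a) * (fwdDiff (1:ℕ))^[a + (p-a)] G 0
    rw [hpa, ← hsplit]
    ring
  rw [hL2]
  -- triangle = square
  have step1 : ∀ p ∈ Finset.range (n+1),
      (∑ q ∈ Finset.range (n+1), Φ p q) = ∑ q ∈ Finset.range (n+1-p), Φ p q := by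
    intro p hp
    rw [Finset.mem_range] at hp
    refine (Finset.sum_subset (Finset.range_subset_range.mpr (by omega)) fun q hq hnq => ?_).symm
    rw [Finset.mem_range] at hq hnq
    exact hΦvan p q (by omega)
  rw [Finset.sum_congr rfl step1, Finset.sum_sigma', Finset.sum_sigma']
  refine Finset.sum_nbij' (fun z => ⟨z.2, z.1 - z.2⟩) (fun z => ⟨z.1 + z.2, z.1⟩)
    ?_ ?_ ?_ ?_ ?_
  · rintro ⟨p, a⟩ hz
    simp only [Finset.mem_sigma, Finset.mem_range] at hz ⊢
    omega
  · rintro ⟨a, b⟩ hz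
    simp only [Finset.mem_sigma, Finset.mem_range] at hz ⊢
    omega
  · rintro ⟨p, a⟩ hz
    simp only [Finset.mem_sigma, Finset.mem_range] at hz
    simp only [Sigma.ext_iff, heq_eq_eq]
    exact ⟨by omega, trivial⟩
  · rintro ⟨a, b⟩ hz
    simp only [Finset.mem_sigma, Finset.mem_range] at hz
    simp only [Sigma.ext_iff, heq_eq_eq]
    exact ⟨trivial, by omega⟩
  · rintro ⟨p, a⟩ hz
    rfl
end
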